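/- arXiv:1703.08728 — 2 statements merged into one kernel-verified Lean document; each statement's English description precedes it below -/
import Mathlib

section
/- Let G be a simple connected graph with n vertices, m edges, minimum degree δ and spectral radius ϱ(G). Then ϱ(G) = (δ-1)/2 + sqrt(2m - nδ + (δ+1)²/4) if and only if G is either a regular graph or a bidegreed graph in which every vertex has degree either δ or n-1. -/
open SimpleGraph Matrix Polynomial Real

/-- The characteristic polynomial of the adjacency matrix of a finite simple graph. -/
noncomputable def adjCharpoly {V : Type*} [Fintype V] (G : SimpleGraph V) : Polynomial ℝ :=
  letI := Classical.decEq V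
  letI : DecidableRel G.Adj := Classical.decRel _
  ((G.adjMatrix ℝ).charpoly)

/-- The adjacency spectrum of a finite simple graph: the multiset of real roots of the
characteristic polynomial of its adjacency matrix (with multiplicity). -/
noncomputable def adjSpectrum {V : Type*} [Fintype V] (G : SimpleGraph V) : Multiset ℝ :=
  (adjCharpoly G).roots

/-- The Laplacian spectrum of a finite simple graph (with multiplicity). -/
noncomputable def lapSpectrum {V : Type*} [Fintype V] (G : SimpleGraph V) : Multiset ℝ :=
  letI := Classical.decEq V
  letI : DecidableRel G.Adj := Classical.decRel _
  ((G.lapMatrix ℝ).charpoly).roots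

/-- The adjacency spectral radius: the largest adjacency eigenvalue. -/
noncomputable def specRadius {V : Type*} [Fintype V] (G : SimpleGraph V) : ℝ :=
  sSup {x : ℝ | x ∈ adjSpectrum G}

/-- The join `G ∇ H` of two graphs: disjoint union plus all cross edges. -/
def graphJoin {α β : Type*} (G : SimpleGraph α) (H : SimpleGraph β) :
    SimpleGraph (α ⊕ β) where
  Adj x y :=
    match x, y with
    | Sum.inl a, Sum.inl b => G.Adj a b
    | Sum.inr a, Sum.inr b => H.Adj a b
    | Sum.inl _, Sum.inr _ => True
    | Sum.inr _, Sum.inl _ => True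
  symm := by
    constructor
    rintro (a | a) (b | b) h
    · exact G.adj_symm h
    · trivial
    · trivial
    · exact H.adj_symm h
  loopless := by
    constructor
    rintro (a | a) h
    · exact G.irrefl h
    · exact H.irrefl h

/-- `m` disjoint copies of the cycle `Cₙ`. -/
def mCycles (m n : ℕ) : SimpleGraph (Fin m × Fin n) where
  Adj x y := x.1 = y.1 ∧ (cycleGraph n).Adj x.2 y.2
  symm := by constructor; rintro ⟨i, a⟩ ⟨j, b⟩ ⟨h1, h2⟩; exact ⟨h1.symm, h2.symm⟩
  loopless := by constructor; rintro ⟨i, a⟩ ⟨_, h⟩; exact (cycleGraph n).irrefl h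

/-- The multicone graph `K_w ∇ m·Cₙ`. -/
def multicone (w m n : ℕ) : SimpleGraph (Fin w ⊕ (Fin m × Fin n)) :=
  graphJoin (completeGraph (Fin w)) (mCycles m n)

set_option linter.unusedSectionVars false

section SpecAux

variable {V : Type*} [Fintype V] [DecidableEq V] (G : SimpleGraph V) [DecidableRel G.Adj]

lemma adjCharpoly_eq : adjCharpoly G = (G.adjMatrix ℝ).charpoly := by
  unfold adjCharpoly
  congr 1
  ext i j
  by_cases h : G.Adj i j <;> simp [h]

lemma isRoot_charpoly_iff (M : Matrix V V ℝ) (μ : ℝ) :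
    M.charpoly.IsRoot μ ↔ ∃ y, y ≠ 0 ∧ M *ᵥ y = μ • y := by
  have h1 : M.charpoly.eval μ = (μ • (1 : Matrix V V ℝ) - M).det := by
    have h := RingHom.map_det (Polynomial.evalRingHom μ) (Matrix.charmatrix M)
    have h2 : M.charpoly.eval μ = (Polynomial.evalRingHom μ) M.charmatrix.det := rfl
    rw [h2, h]
    congr 1
    ext i j
    by_cases hij : i = j
    · subst hij
      simp [Matrix.charmatrix_apply, Matrix.one_apply]
    · simp [Matrix.charmatrix_apply, Matrix.one_apply, hij, Matrix.diagonal_apply_ne _ hij]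
  have key : ∀ y : V → ℝ, (μ • (1 : Matrix V V ℝ) - M) *ᵥ y = μ • y - M *ᵥ y := by
    intro y
    simp [Matrix.sub_mulVec, Matrix.smul_mulVec, Matrix.one_mulVec]
  constructor
  · intro hr
    have hdet : (μ • (1 : Matrix V V ℝ) - M).det = 0 := by rw [← h1]; exact hr
    obtain ⟨y, hy0, hy⟩ := (Matrix.exists_mulVec_eq_zero_iff).2 hdet
    rw [key] at hy
    exact ⟨y, hy0, (sub_eq_zero.mp hy).symm⟩
  · rintro ⟨y, hy0, hy⟩
    have : (μ • (1 : Matrix V V ℝ) - M).det = 0 :=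
      (Matrix.exists_mulVec_eq_zero_iff).1 ⟨y, hy0, by rw [key, hy, sub_self]⟩
    show M.charpoly.eval μ = 0
    rw [h1, this]

lemma mem_adjSpectrum_iff {μ : ℝ} :
    μ ∈ adjSpectrum G ↔ ∃ y, y ≠ 0 ∧ G.adjMatrix ℝ *ᵥ y = μ • y := by
  rw [adjSpectrum, adjCharpoly_eq, Polynomial.mem_roots
    ((Matrix.charpoly_monic _).ne_zero), isRoot_charpoly_iff]

lemma adjMatrix_isHermitian : (G.adjMatrix ℝ).IsHermitian := by
  have := G.isSymm_adjMatrix (α := ℝ)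
  rwa [Matrix.IsHermitian, Matrix.conjTranspose_eq_transpose_of_trivial]

section
variable [Nonempty V]

lemma adjSpectrum_nonempty : {x : ℝ | x ∈ adjSpectrum G}.Nonempty := by
  inhabit V
  have hA := adjMatrix_isHermitian G
  refine ⟨hA.eigenvalues default, ?_⟩
  rw [Set.mem_setOf_eq, mem_adjSpectrum_iff G]
  refine ⟨_, ?_, hA.mulVec_eigenvectorBasis default⟩
  intro h
  exact hA.eigenvectorBasis.orthonormal.ne_zero default (by ext i; exact congrFun h i)

lemma adjSpectrum_finite : {x : ℝ | x ∈ adjSpectrum G}.Finite := by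
  have : {x : ℝ | x ∈ adjSpectrum G} ⊆ ↑(adjSpectrum G).toFinset := by
    intro x hx; simpa using hx
  exact Set.Finite.subset (Finset.finite_toSet _) this

lemma le_specRadius {μ : ℝ} (h : μ ∈ adjSpectrum G) : μ ≤ specRadius G :=
  le_csSup (adjSpectrum_finite G).bddAbove h

lemma specRadius_mem : specRadius G ∈ adjSpectrum G :=
  (adjSpectrum_nonempty G).csSup_mem (adjSpectrum_finite G)

lemma posSemidef_specRadius_sub :
    (specRadius G • (1 : Matrix V V ℝ) - G.adjMatrix ℝ).PosSemidef := by
  have hA := adjMatrix_isHermitian G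
  have hM : (specRadius G • (1 : Matrix V V ℝ) - G.adjMatrix ℝ).IsHermitian := by
    simp [Matrix.IsHermitian, Matrix.conjTranspose_sub, Matrix.conjTranspose_smul, hA.eq]
  refine hM.posSemidef_iff_eigenvalues_nonneg.2 (fun i => show (0:ℝ) ≤ hM.eigenvalues i from ?_)
  have hev := hM.mulVec_eigenvectorBasis i
  set y : V → ℝ := ⇑(hM.eigenvectorBasis i) with hy
  have hy0 : y ≠ 0 := by
    intro h
    exact hM.eigenvectorBasis.orthonormal.ne_zero i (by ext j; exact congrFun h j)
  have : G.adjMatrix ℝ *ᵥ y = (specRadius G - hM.eigenvalues i) • y := by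
    have h2 : (specRadius G • (1 : Matrix V V ℝ) - G.adjMatrix ℝ) *ᵥ y
        = specRadius G • y - G.adjMatrix ℝ *ᵥ y := by
      simp [Matrix.sub_mulVec, Matrix.smul_mulVec, Matrix.one_mulVec]
    rw [h2] at hev
    have := sub_eq_iff_eq_add.mp hev
    rw [sub_smul]
    rw [this]
    abel
  have hmem : (specRadius G - hM.eigenvalues i) ∈ adjSpectrum G :=
    (mem_adjSpectrum_iff G).2 ⟨y, hy0, this⟩
  have := le_specRadius G hmem
  linarith
end

end SpecAux

section SpecAux2

variable {V : Type*} [Fintype V] [DecidableEq V] [Nonempty V]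
  (G : SimpleGraph V) [DecidableRel G.Adj]

/-- Existence of a nonnegative eigenvector for the spectral radius. -/
lemma exists_perron :
    ∃ x : V → ℝ, x ≠ 0 ∧ (∀ v, 0 ≤ x v) ∧
      G.adjMatrix ℝ *ᵥ x = specRadius G • x := by
  obtain ⟨x, hx0, hx⟩ := (mem_adjSpectrum_iff G).1 (specRadius_mem G)
  set ϱ := specRadius G
  set y : V → ℝ := fun v => |x v| with hy
  have hy0 : y ≠ 0 := by
    intro h
    apply hx0
    ext v
    have := congrFun h v
    simpa [hy, abs_eq_zero] using this
  refine ⟨y, hy0, fun v => abs_nonneg _, ?_⟩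
  set M := ϱ • (1 : Matrix V V ℝ) - G.adjMatrix ℝ with hM
  have hMv : ∀ z : V → ℝ, M *ᵥ z = ϱ • z - G.adjMatrix ℝ *ᵥ z := by
    intro z
    simp [hM, Matrix.sub_mulVec, Matrix.smul_mulVec, Matrix.one_mulVec]
  have hpsd := posSemidef_specRadius_sub G
  -- quadratic form at y is ≤ 0
  have hray : y ⬝ᵥ (G.adjMatrix ℝ *ᵥ y) ≥ x ⬝ᵥ (G.adjMatrix ℝ *ᵥ x) := by
    simp only [dotProduct, Matrix.mulVec, Finset.mul_sum]
    apply Finset.sum_le_sum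
    intro v _
    apply Finset.sum_le_sum
    intro w _
    have hA : (0:ℝ) ≤ G.adjMatrix ℝ v w := by
      by_cases h : G.Adj v w <;> simp [h]
    calc x v * (G.adjMatrix ℝ v w * x w) = G.adjMatrix ℝ v w * (x v * x w) := by ring
    _ ≤ G.adjMatrix ℝ v w * |x v * x w| :=
        mul_le_mul_of_nonneg_left (le_abs_self _) hA
    _ = G.adjMatrix ℝ v w * (|x v| * |x w|) := by rw [abs_mul]
    _ = y v * (G.adjMatrix ℝ v w * y w) := by rw [hy]; ring
  have hyy : y ⬝ᵥ y = x ⬝ᵥ x := by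
    simp [dotProduct, hy, abs_mul_abs_self]
  have hxAx : x ⬝ᵥ (G.adjMatrix ℝ *ᵥ x) = ϱ * (x ⬝ᵥ x) := by
    rw [hx, dotProduct_smul, smul_eq_mul]
  have hq : y ⬝ᵥ (M *ᵥ y) ≤ 0 := by
    rw [hMv, dotProduct_sub, dotProduct_smul, hyy, smul_eq_mul]
    linarith
  have hq0 : star y ⬝ᵥ (M *ᵥ y) = 0 := by
    have := hpsd.dotProduct_mulVec_nonneg y
    have hst : star y = y := by ext v; simp
    rw [hst] at this ⊢
    linarith
  have := (hpsd.dotProduct_mulVec_zero_iff y).1 hq0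
  rw [hMv] at this
  have := sub_eq_zero.mp this
  exact this.symm

/-- Positivity of the Perron vector entries on a connected graph with at least two vertices. -/
lemma perron_pos (hG : G.Connected) (hcard : 1 < Fintype.card V)
    {x : V → ℝ} (hx0 : x ≠ 0) (hxn : ∀ v, 0 ≤ x v)
    (hx : G.adjMatrix ℝ *ᵥ x = specRadius G • x) : ∀ v, 0 < x v := by
  set ϱ := specRadius G
  have heig : ∀ v, ∑ w ∈ G.neighborFinset v, x w = ϱ * x v := by
    intro v
    have := congrFun hx v
    rwa [G.adjMatrix_mulVec_apply, Pi.smul_apply, smul_eq_mul] at this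
  obtain ⟨u, hu⟩ : ∃ u, 0 < x u := by
    by_contra h
    push_neg at h
    exact hx0 (funext fun v => le_antisymm (h v) (hxn v))
  -- every vertex has a neighbor
  have hdeg : ∀ v : V, ∃ w, G.Adj v w := by
    intro v
    obtain ⟨w, hw⟩ := Fintype.exists_ne_of_one_lt_card hcard v
    obtain ⟨p⟩ := hG.preconnected v w
    cases p with
    | nil => exact absurd rfl hw
    | cons h _ => exact ⟨_, h⟩
  -- the spectral radius is positive
  have hϱ : 0 < ϱ := by
    obtain ⟨w, hw⟩ := hdeg u
    have h1 := heig w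
    have h2 : 0 < ∑ t ∈ G.neighborFinset w, x t :=
      Finset.sum_pos' (fun t _ => hxn t)
        ⟨u, by rwa [SimpleGraph.mem_neighborFinset, adj_comm], hu⟩
    rcases lt_trichotomy ϱ 0 with h | h | h
    · nlinarith [hxn w]
    · rw [h] at h1; simp at h1; linarith
    · exact h
  -- positivity propagates along edges
  have hstep : ∀ a b, G.Adj a b → 0 < x a → 0 < x b := by
    intro a b hab ha
    have h1 := heig b
    have h2 : 0 < ∑ t ∈ G.neighborFinset b, x t :=
      Finset.sum_pos' (fun t _ => hxn t)
        ⟨a, by rwa [SimpleGraph.mem_neighborFinset, adj_comm], ha⟩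
    nlinarith [hxn b]
  have claim : ∀ (a b : V), G.Walk a b → 0 < x a → 0 < x b := by
    intro a b p
    induction p with
    | nil => exact id
    | cons h _ ih => exact fun ha => ih (hstep _ _ h ha)
  intro v
  obtain ⟨p⟩ := hG.preconnected u v
  exact claim u v p hu

/-- summed eigenvalue equation -/
lemma sum_eigen_identity {x : V → ℝ} {ϱ : ℝ}
    (hx : G.adjMatrix ℝ *ᵥ x = ϱ • x) :
    ϱ * (∑ v, x v) = ∑ v, (G.degree v : ℝ) * x v := by
  have heig : ∀ v, ∑ w ∈ G.neighborFinset v, x w = ϱ * x v := by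
    intro v
    have := congrFun hx v
    rwa [G.adjMatrix_mulVec_apply, Pi.smul_apply, smul_eq_mul] at this
  have h1 : ∑ v, ∑ w ∈ G.neighborFinset v, x w = ϱ * ∑ v, x v := by
    rw [Finset.mul_sum]
    exact Finset.sum_congr rfl fun v _ => heig v
  rw [← h1]
  have h2 : ∀ v : V, ∑ w ∈ G.neighborFinset v, x w
      = ∑ w : V, (if G.Adj v w then x w else 0) := by
    intro v
    rw [SimpleGraph.neighborFinset_eq_filter, Finset.sum_filter]
  calc ∑ v, ∑ w ∈ G.neighborFinset v, x w
      = ∑ v : V, ∑ w : V, (if G.Adj v w then x w else 0) :=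
        Finset.sum_congr rfl fun v _ => h2 v
    _ = ∑ w : V, ∑ v : V, (if G.Adj v w then x w else 0) := Finset.sum_comm
    _ = ∑ w : V, (G.degree w : ℝ) * x w := by
        refine Finset.sum_congr rfl fun w _ => ?_
        rw [Finset.sum_ite, Finset.sum_const, Finset.sum_const_zero, add_zero]
        have : Finset.univ.filter (fun v => G.Adj v w) = G.neighborFinset w := by
          ext t
          simp [SimpleGraph.adj_comm]
        rw [this, SimpleGraph.card_neighborFinset_eq_degree, nsmul_eq_mul]

/-- decomposition of the total sum at a vertex -/
lemma sum_decomp (x : V → ℝ) (v : V) :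
    ∑ w, x w = x v + (∑ w ∈ G.neighborFinset v, x w)
      + ∑ w ∈ Finset.univ \ insert v (G.neighborFinset v), x w := by
  have hvn : v ∉ G.neighborFinset v := by
    simp
  have hsub : insert v (G.neighborFinset v) ⊆ Finset.univ := Finset.subset_univ _
  rw [← Finset.sum_sdiff hsub, Finset.sum_insert hvn]
  ring

lemma eig_apply {x : V → ℝ} {ϱ : ℝ} (hx : G.adjMatrix ℝ *ᵥ x = ϱ • x) (v : V) :
    ∑ w ∈ G.neighborFinset v, x w = ϱ * x v := by
  have := congrFun hx v
  rwa [G.adjMatrix_mulVec_apply, Pi.smul_apply, smul_eq_mul] at this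

lemma sum_degree_sub_min :
    ∑ v : V, ((G.degree v : ℝ) - (G.minDegree : ℝ))
      = 2 * (G.edgeFinset.card : ℝ) - (Fintype.card V : ℝ) * (G.minDegree : ℝ) := by
  rw [Finset.sum_sub_distrib, Finset.sum_const, Finset.card_univ]
  have h := G.sum_degrees_eq_twice_card_edges
  have h2 : (∑ v : V, (G.degree v : ℝ)) = 2 * (G.edgeFinset.card : ℝ) := by
    rw [← Nat.cast_sum]
    rw [h]
    push_cast
    ring
  rw [h2, nsmul_eq_mul]

/-- The Hong--Shu--Fang inequality, plus `δ ≤ ϱ`. -/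
lemma hong_ineq :
    (G.minDegree : ℝ) ≤ specRadius G ∧
    (specRadius G + 1) * (specRadius G - G.minDegree)
      ≤ 2 * (G.edgeFinset.card : ℝ) - (Fintype.card V : ℝ) * (G.minDegree : ℝ) := by
  classical
  obtain ⟨x, hx0, hxn, hx⟩ := exists_perron G
  set ϱ := specRadius G
  set δ : ℝ := (G.minDegree : ℝ)
  set S := ∑ v, x v with hS
  obtain ⟨w0, hw0⟩ : ∃ w, 0 < x w := by
    by_contra h
    push_neg at h
    exact hx0 (funext fun v => le_antisymm (h v) (hxn v))
  have hSpos : 0 < S :=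
    Finset.sum_pos' (fun v _ => hxn v) ⟨w0, Finset.mem_univ _, hw0⟩
  obtain ⟨u, -, hu⟩ := Finset.exists_max_image Finset.univ x ⟨w0, Finset.mem_univ w0⟩
  have hxu : 0 < x u := lt_of_lt_of_le hw0 (hu w0 (Finset.mem_univ _))
  have hdegδ : ∀ v : V, δ ≤ (G.degree v : ℝ) := by
    intro v
    exact_mod_cast Nat.cast_le.2 (G.minDegree_le_degree v)
  have hsum := sum_eigen_identity G hx
  -- δ ≤ ϱ
  have h1 : δ * S ≤ ϱ * S := by
    rw [hsum, hS, Finset.mul_sum]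
    exact Finset.sum_le_sum fun v _ => mul_le_mul_of_nonneg_right (hdegδ v) (hxn v)
  have hδϱ : δ ≤ ϱ := le_of_mul_le_mul_right (by linarith) hSpos
  refine ⟨hδϱ, ?_⟩
  -- inequality 2 : ϱ S - δ S ≤ (2m - nδ) x_u
  have h2 : ϱ * S - δ * S ≤ (2 * (G.edgeFinset.card : ℝ)
      - (Fintype.card V : ℝ) * δ) * x u := by
    rw [hsum, ← sum_degree_sub_min G, hS, Finset.mul_sum, Finset.sum_mul,
      ← Finset.sum_sub_distrib]
    refine Finset.sum_le_sum fun v _ => ?_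
    have := hu v (Finset.mem_univ v)
    have := hdegδ v
    nlinarith [hxn v]
  -- inequality 1 : (ϱ + 1) x_u ≤ S
  have h3 : (ϱ + 1) * x u ≤ S := by
    have hd := sum_decomp G x u
    have he := eig_apply G hx u
    have hT : 0 ≤ ∑ w ∈ Finset.univ \ insert u (G.neighborFinset u), x w :=
      Finset.sum_nonneg fun w _ => hxn w
    rw [hS]
    nlinarith [hd, he]
  -- combine
  rcases eq_or_lt_of_le hδϱ with h | h
  · rw [← h]
    have : ∀ v : V, (0:ℝ) ≤ (G.degree v : ℝ) - δ := fun v => by linarith [hdegδ v]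
    have := Finset.sum_nonneg (s := Finset.univ) fun v _ => this v
    rw [sum_degree_sub_min G] at this
    nlinarith
  · have hchain : (ϱ + 1) * (ϱ - δ) * x u ≤ (ϱ - δ) * S := by
      have := mul_le_mul_of_nonneg_left h3 (le_of_lt (sub_pos.2 h))
      nlinarith
    have : (ϱ + 1) * (ϱ - δ) * x u ≤ (2 * (G.edgeFinset.card : ℝ)
        - (Fintype.card V : ℝ) * δ) * x u := by nlinarith
    exact le_of_mul_le_mul_right (by nlinarith) hxu

end SpecAux2

lemma neighborFinset_eq_erase {V : Type*} [Fintype V] [DecidableEq V]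
    (G : SimpleGraph V) [DecidableRel G.Adj] {v : V}
    (hv : G.degree v = Fintype.card V - 1) :
    G.neighborFinset v = Finset.univ.erase v := by
  apply Finset.eq_of_subset_of_card_le
  · intro w hw
    rw [Finset.mem_erase]
    exact ⟨fun h => (G.notMem_neighborFinset_self v) (h ▸ hw), Finset.mem_univ w⟩
  · rw [Finset.card_erase_of_mem (Finset.mem_univ v), Finset.card_univ,
      SimpleGraph.card_neighborFinset_eq_degree, hv]


set_option maxHeartbeats 1600000 in
/-- For a connected graph `G`, equality `ϱ(G) = (δ-1)/2 + √(2m - nδ + (δ+1)²/4)` holds iff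
`G` is regular, or `G` is bidegreed with every vertex of degree `δ` or `n - 1`. -/
theorem specRadius_eq_iff {V : Type*} [Fintype V] [Nonempty V] [DecidableEq V]
    (G : SimpleGraph V) [DecidableRel G.Adj] (hG : G.Connected) :
    specRadius G = ((G.minDegree : ℝ) - 1) / 2 +
        Real.sqrt (2 * G.edgeFinset.card - Fintype.card V * G.minDegree +
          ((G.minDegree : ℝ) + 1) ^ 2 / 4) ↔
      (∃ d, G.IsRegularOfDegree d) ∨
        ((Finset.image (fun v : V => G.degree v) Finset.univ).card = 2 ∧
          ∀ v : V, G.degree v = G.minDegree ∨ G.degree v = Fintype.card V - 1) := by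
  classical
  set ϱ := specRadius G with hϱdef
  set δ : ℝ := (G.minDegree : ℝ) with hδdef
  set m : ℝ := (G.edgeFinset.card : ℝ) with hmdef
  set n : ℝ := (Fintype.card V : ℝ) with hndef
  set D : ℝ := 2 * m - n * δ + (δ + 1) ^ 2 / 4 with hDdef
  set R : ℝ := (δ - 1) / 2 + Real.sqrt D with hRdef
  have hδ0 : (0:ℝ) ≤ δ := Nat.cast_nonneg _
  have h2m : 0 ≤ 2 * m - n * δ := by
    have h := sum_degree_sub_min G
    have : (0:ℝ) ≤ ∑ v : V, ((G.degree v : ℝ) - (G.minDegree : ℝ)) :=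
      Finset.sum_nonneg fun v _ => by
        have := G.minDegree_le_degree v
        have : (G.minDegree : ℝ) ≤ (G.degree v : ℝ) := by exact_mod_cast this
        linarith
    rw [h] at this
    exact this
  have hD0 : 0 ≤ D := by rw [hDdef]; positivity
  have hs2 : Real.sqrt D ^ 2 = D := Real.sq_sqrt hD0
  have hsnn : 0 ≤ Real.sqrt D := Real.sqrt_nonneg D
  have hRq : (R + 1) * (R - δ) = 2 * m - n * δ := by
    rw [hRdef, hDdef] at *
    linear_combination hs2
  have hRδ : δ ≤ R := by
    have h1 : Real.sqrt ((δ + 1)^2/4) ≤ Real.sqrt D := by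
      apply Real.sqrt_le_sqrt
      rw [hDdef]; linarith
    have h2 : Real.sqrt ((δ + 1)^2/4) = (δ + 1)/2 := by
      rw [show (δ + 1)^2/4 = ((δ+1)/2)^2 by ring]
      exact Real.sqrt_sq (by linarith)
    rw [h2] at h1
    rw [hRdef]
    linarith
  obtain ⟨hδϱ, hhong⟩ := hong_ineq G
  have hub : ϱ ≤ R := by
    by_contra hlt
    push_neg at hlt
    have h1 : (0:ℝ) < ϱ - R := by linarith
    have h2 : (0:ℝ) < ϱ + R + 1 - δ := by linarith
    nlinarith [mul_pos h1 h2]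
  constructor
  · intro heq
    have hEq : (ϱ + 1) * (ϱ - δ) = 2 * m - n * δ := by
      rw [show ϱ = R from heq]
      exact hRq
    by_cases hcard : Fintype.card V ≤ 1
    · -- single vertex: trivially regular
      left
      refine ⟨0, fun v => ?_⟩
      have := G.degree_lt_card_verts v
      omega
    · push_neg at hcard
      obtain ⟨x, hx0, hxn, hx⟩ := exists_perron G
      have hpos : ∀ v, 0 < x v := perron_pos G hG hcard hx0 hxn hx
      set S := ∑ v, x v with hS
      obtain ⟨u, -, hu⟩ := Finset.exists_max_image Finset.univ x
        ⟨Classical.arbitrary V, Finset.mem_univ _⟩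
      have hu' : ∀ v : V, x v ≤ x u := fun v => hu v (Finset.mem_univ v)
      have hxu : 0 < x u := hpos u
      have hSpos : 0 < S :=
        Finset.sum_pos' (fun v _ => hxn v) ⟨u, Finset.mem_univ _, hxu⟩
      have hdegδ : ∀ v : V, δ ≤ (G.degree v : ℝ) := fun v => by
        exact_mod_cast Nat.cast_le.2 (G.minDegree_le_degree v)
      have hsum := sum_eigen_identity G hx
      have i2 : ϱ * S - δ * S ≤ (2 * m - n * δ) * x u := by
        rw [hsum, show 2*m - n*δ = ∑ v : V, ((G.degree v : ℝ) - δ)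
            from (sum_degree_sub_min G).symm, hS, Finset.mul_sum, Finset.sum_mul,
          ← Finset.sum_sub_distrib]
        refine Finset.sum_le_sum fun v _ => ?_
        have h1 := hu' v
        have h2 := hdegδ v
        nlinarith [hxn v]
      have i1 : (ϱ + 1) * x u ≤ S := by
        have hd := sum_decomp G x u
        have he := eig_apply G hx u
        have hT : 0 ≤ ∑ w ∈ Finset.univ \ insert u (G.neighborFinset u), x w :=
          Finset.sum_nonneg fun w _ => hxn w
        calc (ϱ + 1) * x u = ϱ * x u + x u := by ring
        _ ≤ S := by rw [hS]; linarith [hd, he, hT]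
      rcases eq_or_lt_of_le hδϱ with hδeq | hδlt
      · -- ϱ = δ : the graph is regular
        left
        refine ⟨G.minDegree, fun v => ?_⟩
        have h0 : 2 * m - n * δ = 0 := by
          have h' : δ = ϱ := hδeq
          rw [← hEq, h']; ring
        have hzero : ∑ v : V, ((G.degree v : ℝ) - δ) = 0 := by
          rw [sum_degree_sub_min G]
          exact h0
        have := (Finset.sum_eq_zero_iff_of_nonneg
          (fun v _ => by linarith [hdegδ v])).1 hzero v (Finset.mem_univ v)
        have h2 : (G.degree v : ℝ) = (G.minDegree : ℝ) := by
          rw [hδdef] at this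
          linarith
        exact_mod_cast h2
      · -- ϱ > δ
        have hchain1 : (ϱ + 1) * (ϱ - δ) * x u ≤ (ϱ - δ) * S := by
          have h := mul_le_mul_of_nonneg_left i1 (le_of_lt (sub_pos.2 hδlt))
          calc (ϱ + 1) * (ϱ - δ) * x u = (ϱ - δ) * ((ϱ + 1) * x u) := by ring
          _ ≤ (ϱ - δ) * S := h
        have hchain2 : (ϱ - δ) * S = (2 * m - n * δ) * x u := by
          have hle : (ϱ - δ) * S ≤ (2*m - n*δ) * x u := by
            calc (ϱ - δ) * S = ϱ * S - δ * S := by ring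
            _ ≤ (2*m - n*δ) * x u := i2
          have hge : (2*m - n*δ) * x u ≤ (ϱ - δ) * S := by
            rw [← hEq]
            exact hchain1
          linarith
        have hsds : ∑ v : V, ((G.degree v : ℝ) - δ) = 2*m - n*δ := by
          rw [hδdef, hmdef, hndef]
          exact sum_degree_sub_min G
        have hsum' : ϱ * S = ∑ v : V, (G.degree v : ℝ) * x v := by
          rw [hϱdef, hS]
          exact sum_eigen_identity G hx
        have e1 : S = (ϱ + 1) * x u := by
          have h1 : (ϱ + 1) * (ϱ - δ) * x u = (ϱ - δ) * S := by
            rw [hchain2, ← hEq]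
          have h2 : (ϱ - δ) * ((ϱ + 1) * x u) = (ϱ - δ) * S := by
            rw [← h1]; ring
          exact ((mul_left_cancel₀ (by linarith : ϱ - δ ≠ 0) h2)).symm
        have e2 : ∑ v : V, ((G.degree v : ℝ) - δ) * (x u - x v) = 0 := by
          have hsplit : ∑ v : V, ((G.degree v : ℝ) - δ) * (x u - x v)
              = (∑ v : V, ((G.degree v : ℝ) - δ)) * x u
                - ((∑ v : V, (G.degree v : ℝ) * x v) - δ * S) := by
            rw [hS, Finset.mul_sum, Finset.sum_mul, ← Finset.sum_sub_distrib,
              ← Finset.sum_sub_distrib]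
            exact Finset.sum_congr rfl fun v _ => by ring
          rw [hsplit, hsds, ← hsum']
          linear_combination -hchain2
        have dichot : ∀ v : V, G.degree v = G.minDegree ∨ x v = x u := by
          intro v
          have hterm := (Finset.sum_eq_zero_iff_of_nonneg (fun v _ => by
            have := hdegδ v
            have := hu' v
            nlinarith)).1 e2 v (Finset.mem_univ v)
          rcases mul_eq_zero.1 hterm with h | h
          · left
            have h2 : (G.degree v : ℝ) = (G.minDegree : ℝ) := by
              rw [hδdef] at h; linarith
            exact_mod_cast h2
          · right; linarith
        have dichot2 : ∀ v : V, G.degree v = G.minDegree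
            ∨ G.degree v = Fintype.card V - 1 := by
          intro v
          rcases dichot v with h | h
          · exact Or.inl h
          · right
            have hdv : S = ϱ * x v + x v := by rw [h, e1]; ring
            have hd := sum_decomp G x v
            have he := eig_apply G hx v
            have hT : ∑ w ∈ Finset.univ \ insert v (G.neighborFinset v), x w = 0 := by
              rw [hS] at hdv
              linarith [hd, he, hdv]
            have hempty : Finset.univ \ insert v (G.neighborFinset v) = ∅ := by
              by_contra hne
              obtain ⟨w, hw⟩ := Finset.nonempty_iff_ne_empty.2 hne
              have := (Finset.sum_eq_zero_iff_of_nonneg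
                (fun w _ => hxn w)).1 hT w hw
              exact (hpos w).ne' this
            have huniv : insert v (G.neighborFinset v) = Finset.univ :=
              Finset.univ_subset_iff.1 (Finset.sdiff_eq_empty_iff_subset.1 hempty)
            have hcardeq : G.degree v + 1 = Fintype.card V := by
              rw [← SimpleGraph.card_neighborFinset_eq_degree]
              rw [← Finset.card_insert_of_notMem (G.notMem_neighborFinset_self v),
                huniv, Finset.card_univ]
            omega
        by_cases hall : ∀ v : V, G.degree v = G.minDegree
        · exact Or.inl ⟨G.minDegree, hall⟩
        · right
          push_neg at hall
          obtain ⟨v0, hv0⟩ := hall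
          have hv0' : G.degree v0 = Fintype.card V - 1 := (dichot2 v0).resolve_left hv0
          have hδn : G.minDegree ≠ Fintype.card V - 1 := fun h => hv0 (by omega)
          refine ⟨?_, dichot2⟩
          have himg : Finset.image (fun v : V => G.degree v) Finset.univ
              = {G.minDegree, Fintype.card V - 1} := by
            apply Finset.Subset.antisymm
            · intro b hb
              obtain ⟨v, -, rfl⟩ := Finset.mem_image.1 hb
              rcases dichot2 v with h | h <;> simp [h]
            · intro b hb
              rcases Finset.mem_insert.1 hb with h | h
              · obtain ⟨w, hw⟩ := G.exists_minimal_degree_vertex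
                subst h
                exact Finset.mem_image.2 ⟨w, Finset.mem_univ _, hw.symm⟩
              · rw [Finset.mem_singleton.1 h]
                exact Finset.mem_image.2 ⟨v0, Finset.mem_univ _, hv0'⟩
          rw [himg]
          rw [Finset.card_insert_of_notMem (by simpa using hδn), Finset.card_singleton]
  · rintro (⟨d, hreg⟩ | ⟨hcard2, hdeg⟩)
    · -- regular case
      obtain ⟨v0, hv0⟩ := G.exists_minimal_degree_vertex
      have hδd : G.minDegree = d := by rw [hv0, hreg v0]
      have hmn : 2 * m = n * δ := by
        have h := G.sum_degrees_eq_twice_card_edges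
        have h2 : ∑ v : V, G.degree v = Fintype.card V * d := by
          rw [Finset.sum_congr rfl fun v _ => hreg v, Finset.sum_const,
            Finset.card_univ, smul_eq_mul]
        rw [h2] at h
        rw [hmdef, hndef, hδdef, hδd]
        exact_mod_cast h.symm
      have hRd : R = δ := by
        rw [hRdef, hDdef, ← hmn]
        rw [show 2*m - 2*m + (δ+1)^2/4 = ((δ+1)/2)^2 by ring,
          Real.sqrt_sq (by linarith)]
        ring
      have hmem : δ ∈ adjSpectrum G := by
        rw [mem_adjSpectrum_iff G]
        refine ⟨fun _ => 1, ?_, ?_⟩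
        · intro h
          have := congrFun h (Classical.arbitrary V)
          simpa using this
        · ext v
          rw [G.adjMatrix_mulVec_apply, Pi.smul_apply]
          simp only [Finset.sum_const, SimpleGraph.card_neighborFinset_eq_degree,
            hreg v, smul_eq_mul, mul_one, nsmul_eq_mul]
          rw [hδdef, hδd]
      have := le_specRadius G hmem
      rw [hRd]
      linarith
    · -- bidegreed case
      -- extract two distinct degrees
      have hne : ∃ v1 v2 : V, G.degree v1 ≠ G.degree v2 := by
        by_contra h
        push_neg at h
        have : (Finset.image (fun v : V => G.degree v) Finset.univ)
            = {G.degree (Classical.arbitrary V)} := by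
          apply Finset.eq_singleton_iff_unique_mem.2
          refine ⟨Finset.mem_image_of_mem _ (Finset.mem_univ _), ?_⟩
          intro b hb
          obtain ⟨v, -, rfl⟩ := Finset.mem_image.1 hb
          exact h v _
        rw [this] at hcard2
        simp at hcard2
      obtain ⟨v1, v2, hv12⟩ := hne
      have hδn : G.minDegree ≠ Fintype.card V - 1 := by
        intro h
        apply hv12
        rcases hdeg v1 with h1 | h1 <;> rcases hdeg v2 with h2 | h2 <;> omega
      -- hub and low vertices exist
      have hhub : ∃ h0, G.degree h0 = Fintype.card V - 1 := by
        rcases hdeg v1 with h1 | h1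
        · rcases hdeg v2 with h2 | h2
          · exact absurd (h1.trans h2.symm) hv12
          · exact ⟨v2, h2⟩
        · exact ⟨v1, h1⟩
      obtain ⟨h0, hh0⟩ := hhub
      obtain ⟨l0, hl0⟩ := G.exists_minimal_degree_vertex
      set hubs : Finset V := Finset.univ.filter (fun v => G.degree v = Fintype.card V - 1)
        with hhubs
      set s : ℝ := (hubs.card : ℝ) with hsdef
      have hlow_mem : ∀ v : V, v ∉ hubs → G.degree v = G.minDegree := by
        intro v hv
        rcases hdeg v with h | h
        · exact h
        · exfalso
          apply hv
          rw [hhubs]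
          exact Finset.mem_filter.2 ⟨Finset.mem_univ _, h⟩
      have hhub_mem : ∀ v ∈ hubs, G.degree v = Fintype.card V - 1 := by
        intro v hv
        exact (Finset.mem_filter.1 hv).2
      have hh0m : h0 ∈ hubs := Finset.mem_filter.2 ⟨Finset.mem_univ _, hh0⟩
      have hl0m : l0 ∉ hubs := by
        intro h
        exact hδn (hl0.trans (hhub_mem l0 h))
      have hs1 : 1 ≤ hubs.card := Finset.card_pos.2 ⟨h0, hh0m⟩
      have hsn : hubs.card ≤ Fintype.card V := by
        calc hubs.card ≤ Finset.univ.card := Finset.card_le_card (Finset.subset_univ _)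
        _ = Fintype.card V := Finset.card_univ
      -- hubs are adjacent to everything else
      have hub_adj : ∀ h ∈ hubs, ∀ w : V, w ≠ h → G.Adj h w := by
        intro h hh w hw
        have := neighborFinset_eq_erase G (hhub_mem h hh)
        have : w ∈ G.neighborFinset h := by
          rw [this, Finset.mem_erase]
          exact ⟨hw, Finset.mem_univ _⟩
        rwa [SimpleGraph.mem_neighborFinset] at this
      -- each non-hub is adjacent to every hub
      have hlow_hub : ∀ v : V, v ∉ hubs → hubs ⊆ G.neighborFinset v := by
        intro v hv h hh
        rw [SimpleGraph.mem_neighborFinset]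
        have hne : v ≠ h := by
          intro h'
          exact hv (h' ▸ hh)
        exact (hub_adj h hh v hne).symm
      -- total degree count
      have hm2 : 2 * m = s * (n - 1) + (n - s) * δ := by
        have h := G.sum_degrees_eq_twice_card_edges
        have hsplit : ∑ v : V, (G.degree v : ℝ)
            = ∑ v ∈ hubs, (G.degree v : ℝ)
              + ∑ v ∈ Finset.univ \ hubs, (G.degree v : ℝ) := by
          rw [add_comm, Finset.sum_sdiff (Finset.subset_univ _)]
        have hcast : (∑ v : V, (G.degree v : ℝ)) = 2 * m := by
          rw [← Nat.cast_sum, h]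
          push_cast
          ring
        have hhubsum : ∑ v ∈ hubs, (G.degree v : ℝ) = s * (n - 1) := by
          rw [Finset.sum_congr rfl (fun v hv => by
            rw [hhub_mem v hv, Nat.cast_sub (by
              have := Fintype.card_pos (α := V); omega), Nat.cast_one]),
            Finset.sum_const, nsmul_eq_mul]
        have hlowsum : ∑ v ∈ Finset.univ \ hubs, (G.degree v : ℝ) = (n - s) * δ := by
          rw [Finset.sum_congr rfl (fun v hv => by
            rw [hlow_mem v (Finset.mem_sdiff.1 hv).2]),
            Finset.sum_const, nsmul_eq_mul, Finset.card_sdiff_of_subset (Finset.subset_univ _),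
            Finset.card_univ, Nat.cast_sub hsn]
        rw [← hcast, hsplit, hhubsum, hlowsum]
      -- the eigenvector
      set a : ℝ := R + s - δ with hadef
      set y : V → ℝ := fun v => if G.degree v = Fintype.card V - 1 then a else s
        with hydef
      have hy_hub : ∀ v ∈ hubs, y v = a := fun v hv => if_pos (hhub_mem v hv)
      have hy_low : ∀ v : V, v ∉ hubs → y v = s := by
        intro v hv
        apply if_neg
        intro h
        exact hv (Finset.mem_filter.2 ⟨Finset.mem_univ _, h⟩)
      have hytot : ∑ w, y w = s * a + (n - s) * s := by
        rw [show (Finset.univ : Finset V) = hubs ∪ (Finset.univ \ hubs) by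
          rw [Finset.union_sdiff_of_subset (Finset.subset_univ _)]]
        rw [Finset.sum_union (Finset.disjoint_sdiff)]
        rw [Finset.sum_congr rfl hy_hub,
          Finset.sum_congr rfl (fun v hv => hy_low v (Finset.mem_sdiff.1 hv).2),
          Finset.sum_const, Finset.sum_const, nsmul_eq_mul, nsmul_eq_mul,
          Finset.card_sdiff_of_subset (Finset.subset_univ _), Finset.card_univ,
          Nat.cast_sub hsn]
      have hy0 : y ≠ 0 := by
        intro h
        have := congrFun h l0
        rw [hy_low l0 hl0m] at this
        rw [hsdef] at this
        have : (hubs.card : ℝ) = 0 := this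
        have : hubs.card = 0 := by exact_mod_cast this
        omega
      have hAy : G.adjMatrix ℝ *ᵥ y = R • y := by
        ext v
        rw [G.adjMatrix_mulVec_apply, Pi.smul_apply, smul_eq_mul]
        by_cases hv : v ∈ hubs
        · -- hub row
          rw [neighborFinset_eq_erase G (hhub_mem v hv)]
          rw [Finset.sum_erase_eq_sub (Finset.mem_univ v), hytot,
            hy_hub v hv]
          rw [hadef]
          linear_combination -hRq - hm2
        · -- low row
          have hsubset := hlow_hub v hv
          rw [← Finset.sum_sdiff hsubset]
          have h1 : ∑ w ∈ hubs, y w = s * a := by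
            rw [Finset.sum_congr rfl hy_hub, Finset.sum_const, nsmul_eq_mul]
          have h2 : ∑ w ∈ G.neighborFinset v \ hubs, y w = (δ - s) * s := by
            rw [Finset.sum_congr rfl (fun w hw =>
              hy_low w (Finset.mem_sdiff.1 hw).2), Finset.sum_const, nsmul_eq_mul,
              Finset.card_sdiff_of_subset hsubset, SimpleGraph.card_neighborFinset_eq_degree,
              hlow_mem v hv, Nat.cast_sub (by
                have := Finset.card_le_card hsubset
                rwa [SimpleGraph.card_neighborFinset_eq_degree, hlow_mem v hv] at this)]
          rw [h1, h2, hy_low v hv, hadef]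
          ring
      have hmem : R ∈ adjSpectrum G := (mem_adjSpectrum_iff G).2 ⟨y, hy0, hAy⟩
      have := le_specRadius G hmem
      linarith
end

section
/- A graph G on n vertices has n as one of its Laplacian eigenvalues if and only if G is the join of two (nonempty) graphs. -/
open SimpleGraph Matrix Polynomial Real

section aux

open Finset

variable {V : Type*} [Fintype V] [DecidableEq V]

private lemma my_eval_charpoly (M : Matrix V V ℝ) (μ : ℝ) :
    M.charpoly.eval μ = (Matrix.diagonal (fun _ => μ) - M).det := by
  have h := RingHom.map_det (Polynomial.evalRingHom μ) (Matrix.charmatrix M)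
  rw [Matrix.charpoly, show Polynomial.eval μ (Matrix.charmatrix M).det
      = ((Polynomial.evalRingHom μ).mapMatrix (Matrix.charmatrix M)).det from h]
  congr 1
  ext i j
  by_cases h : i = j
  · subst h; simp
  · simp [h, Matrix.charmatrix_apply_ne _ _ _ h, Matrix.diagonal_apply_ne _ h]

private lemma lap_add_lap_compl (G : SimpleGraph V) [DecidableRel G.Adj] :
    G.lapMatrix ℝ + Gᶜ.lapMatrix ℝ
      = (Fintype.card V : ℝ) • (1 : Matrix V V ℝ) - Matrix.of (fun _ _ => (1 : ℝ)) := by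
  classical
  ext i j
  by_cases h : i = j
  · subst h
    have hd : (Gᶜ.degree i : ℝ) = (Fintype.card V : ℝ) - 1 - G.degree i := by
      have h1 := G.degree_compl (v := i)
      have h2 := G.degree_lt_card_verts i
      rw [h1, Nat.cast_sub (by omega), Nat.cast_sub (by omega : (1:ℕ) ≤ Fintype.card V)]
      push_cast
      ring
    simp only [Matrix.add_apply, Matrix.sub_apply, Matrix.of_apply, SimpleGraph.lapMatrix,
      SimpleGraph.degMatrix, SimpleGraph.adjMatrix_apply, Matrix.diagonal_apply_eq,
      Matrix.smul_apply, Matrix.one_apply_eq, G.irrefl, Gᶜ.irrefl, if_false, hd,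
      smul_eq_mul, mul_one]
    ring
  · have hcadj : Gᶜ.Adj i j ↔ ¬ G.Adj i j := by simp [G.compl_adj, h]
    simp only [Matrix.add_apply, Matrix.sub_apply, Matrix.of_apply, SimpleGraph.lapMatrix,
      SimpleGraph.degMatrix, SimpleGraph.adjMatrix_apply, Matrix.diagonal_apply_ne _ h,
      Matrix.smul_apply, Matrix.one_apply_ne h, hcadj]
    by_cases hg : G.Adj i j <;> simp [hg]

private lemma key (G : SimpleGraph V) [DecidableRel G.Adj] :
    (Fintype.card V : ℝ) ∈ ((G.lapMatrix ℝ).charpoly).roots ↔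
      ∃ s : Finset V, s.Nonempty ∧ sᶜ.Nonempty ∧ ∀ u ∈ s, ∀ v ∈ sᶜ, G.Adj u v := by
  classical
  have hcompl : ∀ x : V → ℝ, Gᶜ.lapMatrix ℝ *ᵥ x
      = (Fintype.card V : ℝ) • x - (∑ v, x v) • (fun _ : V => (1:ℝ)) - G.lapMatrix ℝ *ᵥ x := by
    intro x
    have h := congrArg (fun M => M *ᵥ x) (lap_add_lap_compl G)
    simp only [Matrix.add_mulVec, Matrix.sub_mulVec, Matrix.smul_mulVec,
      Matrix.one_mulVec] at h
    have hJ : (Matrix.of (fun _ _ : V => (1:ℝ))) *ᵥ x = fun _ : V => ∑ v, x v := by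
      ext i; simp [Matrix.mulVec, dotProduct]
    rw [hJ] at h
    have := congrArg (fun y => y - G.lapMatrix ℝ *ᵥ x) h
    simp only [add_sub_cancel_left] at this
    rw [this]
    ext i
    simp [mul_comm]
  rw [Polynomial.mem_roots (G.lapMatrix ℝ).charpoly_monic.ne_zero]
  constructor
  · rintro hroot
    have hdet : (Matrix.diagonal (fun _ => (Fintype.card V : ℝ)) - G.lapMatrix ℝ).det = 0 := by
      rw [← my_eval_charpoly]; exact hroot
    obtain ⟨x, hx0, hx⟩ := (Matrix.exists_mulVec_eq_zero_iff).mpr hdet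
    have heig : G.lapMatrix ℝ *ᵥ x = (Fintype.card V : ℝ) • x := by
      have := hx
      rw [Matrix.sub_mulVec] at this
      have hdg : Matrix.diagonal (fun _ => (Fintype.card V : ℝ)) *ᵥ x
          = (Fintype.card V : ℝ) • x := by
        ext i; simp [Matrix.mulVec_diagonal]
      rw [hdg] at this
      exact (sub_eq_zero.mp this).symm
    have hc : Gᶜ.lapMatrix ℝ *ᵥ x = fun _ => -(∑ v, x v) := by
      rw [hcompl, heig]
      ext i; simp
    -- quadratic form
    have hpsd := (Gᶜ.posSemidef_lapMatrix ℝ).dotProduct_mulVec_nonneg x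
    rw [star_trivial, hc] at hpsd
    have hdot : x ⬝ᵥ (fun _ => -(∑ v, x v)) = -(∑ v, x v)^2 := by
      simp [dotProduct, ← Finset.sum_mul]
      ring
    rw [hdot] at hpsd
    have hsum : (∑ v, x v) = 0 := by nlinarith [sq_nonneg (∑ v, x v)]
    have hzero : Gᶜ.lapMatrix ℝ *ᵥ x = 0 := by
      rw [hc, hsum]; ext i; simp
    have hforall : ∀ i j : V, Gᶜ.Adj i j → x i = x j := by
      rw [← Gᶜ.lapMatrix_mulVec_eq_zero_iff_forall_adj (x := x)]
      exact hzero
    obtain ⟨i₀, hi₀⟩ : ∃ i, x i ≠ 0 := by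
      by_contra h
      push_neg at h
      exact hx0 (funext fun i => h i)
    refine ⟨Finset.univ.filter (fun v => x v = x i₀), ⟨i₀, by simp⟩, ?_, ?_⟩
    · by_contra h
      rw [Finset.not_nonempty_iff_eq_empty] at h
      have hall : ∀ v, x v = x i₀ := by
        intro v
        by_contra hne
        have : v ∈ (Finset.univ.filter (fun v => x v = x i₀))ᶜ := by
          simp [hne]
        rw [h] at this
        exact absurd this (Finset.notMem_empty v)
      have : (∑ v : V, x v) = (Fintype.card V : ℝ) * x i₀ := by
        rw [Finset.sum_congr rfl (fun v _ => hall v)]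
        simp [Finset.card_univ, mul_comm]
      rw [hsum] at this
      have hcard : 0 < Fintype.card V := Fintype.card_pos_iff.mpr ⟨i₀⟩
      have : x i₀ = 0 := by
        rcases mul_eq_zero.mp this.symm with h' | h'
        · exact absurd h' (by positivity)
        · exact h'
      exact hi₀ this
    · intro u hu v hv
      simp only [Finset.mem_filter, Finset.mem_univ, true_and] at hu
      simp only [Finset.mem_compl, Finset.mem_filter, Finset.mem_univ, true_and] at hv
      have hne : x u ≠ x v := by rw [hu]; exact fun h => hv h.symm
      by_contra hnadj
      have huv : u ≠ v := fun h => hne (h ▸ rfl)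
      exact hne (hforall u v ((G.compl_adj u v).mpr ⟨huv, hnadj⟩))
  · rintro ⟨s, hs, hsc, hadj⟩
    set a : ℝ := (sᶜ.card : ℝ) with ha
    set b : ℝ := (s.card : ℝ) with hb
    set x : V → ℝ := fun v => if v ∈ s then a else -b with hxdef
    have hsum : (∑ v, x v) = 0 := by
      rw [← Finset.sum_add_sum_compl s]
      have h1 : ∑ v ∈ s, x v = b * a := by
        rw [Finset.sum_congr rfl (fun v hv => show x v = a from by simp [hxdef, hv]),
          Finset.sum_const, nsmul_eq_mul, hb]
      have h2 : ∑ v ∈ sᶜ, x v = a * (-b) := by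
        rw [Finset.sum_congr rfl (fun v hv => show x v = -b from by
            simp only [hxdef]; rw [if_neg (Finset.mem_compl.mp hv)]),
          Finset.sum_const, nsmul_eq_mul, ha]
      rw [h1, h2]; ring
    have hzero : Gᶜ.lapMatrix ℝ *ᵥ x = 0 := by
      rw [Gᶜ.lapMatrix_mulVec_eq_zero_iff_forall_adj]
      intro i j hij
      obtain ⟨hne, hnadj⟩ := (G.compl_adj i j).mp hij
      by_cases hi : i ∈ s <;> by_cases hj : j ∈ s
      · simp [hxdef, hi, hj]
      · exact absurd (hadj i hi j (Finset.mem_compl.mpr hj)) hnadj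
      · exact absurd (hadj j hj i (Finset.mem_compl.mpr hi)) (fun h => hnadj h.symm)
      · simp [hxdef, hi, hj]
    have heig : G.lapMatrix ℝ *ᵥ x = (Fintype.card V : ℝ) • x := by
      have h := hcompl x
      rw [hzero, hsum] at h
      simp only [zero_smul, sub_zero] at h
      exact (sub_eq_zero.mp h.symm).symm
    have hx0 : x ≠ 0 := by
      obtain ⟨u, hu⟩ := hs
      intro h
      have : x u = 0 := congrFun h u
      rw [hxdef] at this
      simp only [if_pos hu] at this
      rw [ha] at this
      have : sᶜ.card = 0 := by exact_mod_cast this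
      rw [Finset.card_eq_zero] at this
      exact Finset.nonempty_iff_ne_empty.mp hsc this
    have hdet : (Matrix.diagonal (fun _ => (Fintype.card V : ℝ)) - G.lapMatrix ℝ).det = 0 := by
      rw [← Matrix.exists_mulVec_eq_zero_iff]
      refine ⟨x, hx0, ?_⟩
      rw [Matrix.sub_mulVec, heig]
      ext i
      simp [Matrix.mulVec_diagonal]
    rw [Polynomial.IsRoot, my_eval_charpoly]
    exact hdet

end aux

/-- A graph `G` on `n` vertices has `n` as a Laplacian eigenvalue iff `G` is the join of two
(nonempty) graphs. -/

theorem card_mem_lapSpectrum_iff_join {V : Type*} [Fintype V] [DecidableEq V]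
    (G : SimpleGraph V) :
    (Fintype.card V : ℝ) ∈ lapSpectrum G ↔
      ∃ s : Finset V, s.Nonempty ∧ sᶜ.Nonempty ∧ ∀ u ∈ s, ∀ v ∈ sᶜ, G.Adj u v := by
  classical
  have h : lapSpectrum G = ((G.lapMatrix ℝ).charpoly).roots := by
    unfold lapSpectrum
    congr!
  rw [h]
  exact key G
end
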